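/- Let A be an order-3 real tensor with dimensions n₁×n₂×n₃, all entries at most 1 in absolute value, and ε > 0. Then there exist at most 1/ε² cut tensors (tensors constant on some combinatorial box S₁×S₂×S₃ and zero elsewhere) whose sum B satisfies ‖A−B‖_□ ≤ ε·n₁·n₂·n₃, where ‖M‖_□ is the maximum over boxes S₁×S₂×S₃ of |∑_{(i,j,k)∈S₁×S₂×S₃} M_{ijk}|. -/

import Mathlib

private lemma sum_box {n₁ n₂ n₃ : ℕ} (T₁ : Finset (Fin n₁)) (T₂ : Finset (Fin n₂))
    (T₃ : Finset (Fin n₃)) (g : Fin n₁ → Fin n₂ → Fin n₃ → ℝ) :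
    (∑ i, ∑ j, ∑ k, if i ∈ T₁ ∧ j ∈ T₂ ∧ k ∈ T₃ then g i j k else 0)
      = ∑ i ∈ T₁, ∑ j ∈ T₂, ∑ k ∈ T₃, g i j k := by
  simp [ite_and, Finset.sum_ite_mem]

private lemma cut_step {n₁ n₂ n₃ : ℕ} {ε : ℝ} (hε : 0 < ε)
    (C : Fin n₁ → Fin n₂ → Fin n₃ → ℝ)
    (T₁ : Finset (Fin n₁)) (T₂ : Finset (Fin n₂)) (T₃ : Finset (Fin n₃))
    (hbig : ε * ((n₁ : ℝ) * n₂ * n₃) < |∑ i ∈ T₁, ∑ j ∈ T₂, ∑ k ∈ T₃, C i j k|) :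
    0 < ((n₁ : ℝ) * n₂ * n₃) ∧
    ∃ d₀ : ℝ,
      (∑ i, ∑ j, ∑ k, (C i j k - if i ∈ T₁ ∧ j ∈ T₂ ∧ k ∈ T₃ then d₀ else 0)^2)
        + ε^2 * ((n₁ : ℝ) * n₂ * n₃) ≤ ∑ i, ∑ j, ∑ k, (C i j k)^2 := by
  set N : ℝ := (n₁ : ℝ) * n₂ * n₃ with hNdef
  set σ : ℝ := ∑ i ∈ T₁, ∑ j ∈ T₂, ∑ k ∈ T₃, C i j k with hσdef
  have hN0 : 0 ≤ N := by positivity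
  have hσ0 : σ ≠ 0 := by
    intro h
    rw [h] at hbig
    simp at hbig
    nlinarith
  have hT₁ : T₁.Nonempty := by
    rcases T₁.eq_empty_or_nonempty with h | h
    · exact absurd (by simp [hσdef, h]) hσ0
    · exact h
  have hT₂ : T₂.Nonempty := by
    rcases T₂.eq_empty_or_nonempty with h | h
    · exact absurd (by simp [hσdef, h]) hσ0
    · exact h
  have hT₃ : T₃.Nonempty := by
    rcases T₃.eq_empty_or_nonempty with h | h
    · exact absurd (by simp [hσdef, h]) hσ0
    · exact h
  set bs : ℝ := (T₁.card : ℝ) * T₂.card * T₃.card with hbsdef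
  have hbs : 0 < bs := by
    have h1 : (0:ℝ) < T₁.card := by exact_mod_cast Finset.card_pos.mpr hT₁
    have h2 : (0:ℝ) < T₂.card := by exact_mod_cast Finset.card_pos.mpr hT₂
    have h3 : (0:ℝ) < T₃.card := by exact_mod_cast Finset.card_pos.mpr hT₃
    exact mul_pos (mul_pos h1 h2) h3
  have hbsN : bs ≤ N := by
    have h1 : (T₁.card : ℝ) ≤ n₁ := by
      exact_mod_cast (Finset.card_le_univ T₁).trans_eq (Finset.card_fin n₁)
    have h2 : (T₂.card : ℝ) ≤ n₂ := by
      exact_mod_cast (Finset.card_le_univ T₂).trans_eq (Finset.card_fin n₂)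
    have h3 : (T₃.card : ℝ) ≤ n₃ := by
      exact_mod_cast (Finset.card_le_univ T₃).trans_eq (Finset.card_fin n₃)
    rw [hbsdef, hNdef]
    have c1 : (0:ℝ) ≤ T₁.card := by positivity
    have c2 : (0:ℝ) ≤ T₂.card := by positivity
    have c3 : (0:ℝ) ≤ T₃.card := by positivity
    have n1 : (0:ℝ) ≤ (n₁:ℝ) := by positivity
    have n2 : (0:ℝ) ≤ (n₂:ℝ) := by positivity
    exact mul_le_mul (mul_le_mul h1 h2 c2 n1) h3 c3 (by positivity)
  have hNpos : 0 < N := lt_of_lt_of_le hbs hbsN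
  refine ⟨hNpos, σ / bs, ?_⟩
  set d₀ : ℝ := σ / bs with hd₀
  have hpt : ∀ i j k, (C i j k - if i ∈ T₁ ∧ j ∈ T₂ ∧ k ∈ T₃ then d₀ else 0)^2
      = (C i j k)^2 - (if i ∈ T₁ ∧ j ∈ T₂ ∧ k ∈ T₃ then 2*d₀*C i j k - d₀^2 else 0) := by
    intro i j k
    by_cases h : i ∈ T₁ ∧ j ∈ T₂ ∧ k ∈ T₃ <;> simp [h] <;> ring
  have hE : (∑ i, ∑ j, ∑ k, (C i j k - if i ∈ T₁ ∧ j ∈ T₂ ∧ k ∈ T₃ then d₀ else 0)^2)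
      = (∑ i, ∑ j, ∑ k, (C i j k)^2) - σ^2 / bs := by
    calc (∑ i, ∑ j, ∑ k, (C i j k - if i ∈ T₁ ∧ j ∈ T₂ ∧ k ∈ T₃ then d₀ else 0)^2)
        = ∑ i, ∑ j, ∑ k, ((C i j k)^2
            - (if i ∈ T₁ ∧ j ∈ T₂ ∧ k ∈ T₃ then 2*d₀*C i j k - d₀^2 else 0)) := by
          simp_rw [hpt]
      _ = (∑ i, ∑ j, ∑ k, (C i j k)^2)
            - (∑ i, ∑ j, ∑ k, (if i ∈ T₁ ∧ j ∈ T₂ ∧ k ∈ T₃ then 2*d₀*C i j k - d₀^2 else 0)) := by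
          simp [Finset.sum_sub_distrib]
      _ = (∑ i, ∑ j, ∑ k, (C i j k)^2)
            - (∑ i ∈ T₁, ∑ j ∈ T₂, ∑ k ∈ T₃, (2*d₀*C i j k - d₀^2)) := by
          rw [sum_box]
      _ = (∑ i, ∑ j, ∑ k, (C i j k)^2) - (2*d₀*σ - d₀^2 * bs) := by
          congr 1
          simp [Finset.sum_sub_distrib, ← Finset.mul_sum, Finset.sum_const, nsmul_eq_mul,
            hσdef, hbsdef]
          ring
      _ = (∑ i, ∑ j, ∑ k, (C i j k)^2) - σ^2 / bs := by
          rw [hd₀]; field_simp; ring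
  rw [hE]
  have hσ2 : ε^2 * N^2 ≤ σ^2 := by
    have h1 : ε * N ≤ |σ| := hbig.le
    have h2 : (ε*N)^2 ≤ |σ|^2 := by nlinarith [abs_nonneg σ, mul_nonneg hε.le hN0]
    rw [sq_abs] at h2
    nlinarith
  have hdiv : ε^2 * N ≤ σ^2 / bs := by
    rw [le_div_iff₀ hbs]
    nlinarith [sq_nonneg ε, hNpos]
  linarith

private lemma cut_main {n₁ n₂ n₃ : ℕ} {ε : ℝ} (hε : 0 < ε) (s : ℕ) :
    ∀ C : Fin n₁ → Fin n₂ → Fin n₃ → ℝ,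
      (∑ i, ∑ j, ∑ k, (C i j k)^2) ≤ (s : ℝ) * ε^2 * ((n₁ : ℝ) * n₂ * n₃) →
      ∃ (r : ℕ) (S₁ : Fin r → Finset (Fin n₁)) (S₂ : Fin r → Finset (Fin n₂))
        (S₃ : Fin r → Finset (Fin n₃)) (d : Fin r → ℝ),
        (r : ℝ) * ε^2 * ((n₁ : ℝ) * n₂ * n₃) ≤ (∑ i, ∑ j, ∑ k, (C i j k)^2) ∧
        ∀ (T₁ : Finset (Fin n₁)) (T₂ : Finset (Fin n₂)) (T₃ : Finset (Fin n₃)),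
          |∑ i ∈ T₁, ∑ j ∈ T₂, ∑ k ∈ T₃,
              (C i j k - ∑ t, if i ∈ S₁ t ∧ j ∈ S₂ t ∧ k ∈ S₃ t then d t else 0)|
            ≤ ε * ((n₁ : ℝ) * n₂ * n₃) := by
  induction s with
  | zero =>
    intro C hC
    by_cases h : ∀ (T₁ : Finset (Fin n₁)) (T₂ : Finset (Fin n₂)) (T₃ : Finset (Fin n₃)),
        |∑ i ∈ T₁, ∑ j ∈ T₂, ∑ k ∈ T₃, C i j k| ≤ ε * ((n₁ : ℝ) * n₂ * n₃)
    · refine ⟨0, Fin.elim0, Fin.elim0, Fin.elim0, Fin.elim0, by simp; positivity, ?_⟩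
      intro T₁ T₂ T₃
      simpa using h T₁ T₂ T₃
    · exfalso
      push_neg at h
      obtain ⟨T₁, T₂, T₃, hbig⟩ := h
      obtain ⟨hNpos, d₀, hstep⟩ := cut_step hε C T₁ T₂ T₃ hbig
      have hpos : (0:ℝ) ≤ ∑ i, ∑ j, ∑ k,
          (C i j k - if i ∈ T₁ ∧ j ∈ T₂ ∧ k ∈ T₃ then d₀ else 0)^2 := by positivity
      simp at hC
      nlinarith [sq_nonneg ε, mul_pos (mul_pos hε hε) hNpos]
  | succ s ih =>
    intro C hC
    by_cases h : ∀ (T₁ : Finset (Fin n₁)) (T₂ : Finset (Fin n₂)) (T₃ : Finset (Fin n₃)),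
        |∑ i ∈ T₁, ∑ j ∈ T₂, ∑ k ∈ T₃, C i j k| ≤ ε * ((n₁ : ℝ) * n₂ * n₃)
    · refine ⟨0, Fin.elim0, Fin.elim0, Fin.elim0, Fin.elim0, by simp; positivity, ?_⟩
      intro T₁ T₂ T₃
      simpa using h T₁ T₂ T₃
    · push_neg at h
      obtain ⟨T₁, T₂, T₃, hbig⟩ := h
      obtain ⟨hNpos, d₀, hstep⟩ := cut_step hε C T₁ T₂ T₃ hbig
      set C' : Fin n₁ → Fin n₂ → Fin n₃ → ℝ :=
        fun i j k => C i j k - if i ∈ T₁ ∧ j ∈ T₂ ∧ k ∈ T₃ then d₀ else 0 with hC'def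
      have hC' : (∑ i, ∑ j, ∑ k, (C' i j k)^2) ≤ (s : ℝ) * ε^2 * ((n₁ : ℝ) * n₂ * n₃) := by
        push_cast at hC ⊢
        nlinarith
      obtain ⟨r, S₁, S₂, S₃, d, hr, hcut⟩ := ih C' hC'
      refine ⟨r + 1, Fin.cons T₁ S₁, Fin.cons T₂ S₂, Fin.cons T₃ S₃, Fin.cons d₀ d, ?_, ?_⟩
      · push_cast
        nlinarith
      · intro U₁ U₂ U₃
        have hpt2 : ∀ i j k,
            (C i j k - ∑ t : Fin (r+1), if i ∈ (Fin.cons T₁ S₁ : Fin (r+1) → Finset (Fin n₁)) t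
                ∧ j ∈ (Fin.cons T₂ S₂ : Fin (r+1) → Finset (Fin n₂)) t
                ∧ k ∈ (Fin.cons T₃ S₃ : Fin (r+1) → Finset (Fin n₃)) t
              then (Fin.cons d₀ d : Fin (r+1) → ℝ) t else 0)
            = (C' i j k - ∑ t : Fin r, if i ∈ S₁ t ∧ j ∈ S₂ t ∧ k ∈ S₃ t then d t else 0) := by
          intro i j k
          rw [Fin.sum_univ_succ]
          simp [hC'def]
          ring
        simp_rw [hpt2]
        exact hcut U₁ U₂ U₃

theorem cut_decomposition_exists_tensor (n₁ n₂ n₃ : ℕ)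
    (A : Fin n₁ → Fin n₂ → Fin n₃ → ℝ)
    (hA : ∀ i j k, |A i j k| ≤ 1) (ε : ℝ) (hε : 0 < ε) :
    ∃ (r : ℕ) (S₁ : Fin r → Finset (Fin n₁)) (S₂ : Fin r → Finset (Fin n₂))
      (S₃ : Fin r → Finset (Fin n₃)) (d : Fin r → ℝ),
      (r : ℝ) ≤ 1 / ε ^ 2 ∧
      ∀ (T₁ : Finset (Fin n₁)) (T₂ : Finset (Fin n₂)) (T₃ : Finset (Fin n₃)),
        |∑ i ∈ T₁, ∑ j ∈ T₂, ∑ k ∈ T₃,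
            (A i j k - ∑ t, if i ∈ S₁ t ∧ j ∈ S₂ t ∧ k ∈ S₃ t then d t else 0)|
          ≤ ε * n₁ * n₂ * n₃ := by
  by_cases hN : (n₁ : ℝ) * n₂ * n₃ = 0
  · refine ⟨0, Fin.elim0, Fin.elim0, Fin.elim0, Fin.elim0, by simp; positivity, ?_⟩
    intro T₁ T₂ T₃
    have hz : n₁ = 0 ∨ n₂ = 0 ∨ n₃ = 0 := by
      have := mul_eq_zero.mp hN
      rcases this with h | h
      · rcases mul_eq_zero.mp h with h' | h'
        · exact Or.inl (by exact_mod_cast h')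
        · exact Or.inr (Or.inl (by exact_mod_cast h'))
      · exact Or.inr (Or.inr (by exact_mod_cast h))
    rcases hz with h | h | h <;> subst h
    · simp [Finset.eq_empty_of_isEmpty T₁]
    · simp [Finset.eq_empty_of_isEmpty T₂]
    · simp [Finset.eq_empty_of_isEmpty T₃]
  · have hN0 : (0:ℝ) ≤ (n₁ : ℝ) * n₂ * n₃ := by positivity
    have hNpos : (0:ℝ) < (n₁ : ℝ) * n₂ * n₃ := lt_of_le_of_ne hN0 (Ne.symm hN)
    have hE : (∑ i, ∑ j, ∑ k, (A i j k)^2) ≤ (n₁ : ℝ) * n₂ * n₃ := by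
      calc (∑ i, ∑ j, ∑ k, (A i j k)^2)
          ≤ ∑ _i : Fin n₁, ∑ _j : Fin n₂, ∑ _k : Fin n₃, (1:ℝ) := by
            refine Finset.sum_le_sum fun i _ => Finset.sum_le_sum fun j _ =>
              Finset.sum_le_sum fun k _ => ?_
            have := hA i j k
            nlinarith [abs_nonneg (A i j k), sq_abs (A i j k)]
        _ = (n₁ : ℝ) * n₂ * n₃ := by simp; ring
    set s : ℕ := ⌈1 / ε^2⌉₊ with hs
    have hsc : 1 / ε^2 ≤ (s : ℝ) := Nat.le_ceil _
    have hsε : 1 ≤ (s : ℝ) * ε^2 := by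
      rw [div_le_iff₀ (by positivity)] at hsc
      linarith
    have hC : (∑ i, ∑ j, ∑ k, (A i j k)^2) ≤ (s : ℝ) * ε^2 * ((n₁ : ℝ) * n₂ * n₃) := by
      nlinarith
    obtain ⟨r, S₁, S₂, S₃, d, hr, hcut⟩ := cut_main hε s A hC
    refine ⟨r, S₁, S₂, S₃, d, ?_, ?_⟩
    · have h2 : (r : ℝ) * ε^2 * ((n₁ : ℝ) * n₂ * n₃) ≤ 1 * ((n₁ : ℝ) * n₂ * n₃) := by
        rw [one_mul]; exact hr.trans hE
      have h1 : (r : ℝ) * ε^2 ≤ 1 := (mul_le_mul_iff_of_pos_right hNpos).mp h2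
      rw [le_div_iff₀ (by positivity)]
      linarith
    · intro T₁ T₂ T₃
      calc _ ≤ ε * ((n₁ : ℝ) * n₂ * n₃) := hcut T₁ T₂ T₃
        _ = ε * n₁ * n₂ * n₃ := by ring
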